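/- Let E ∈ C⁴(ℝ^N) and let Ω ⊂ ℝ^N be compact with λ1(x) < 0 < λ2(x) for all x ∈ Ω; set g = min_{x∈Ω} min(−λ1(x), λ2(x)) > 0, and suppose ‖∇E‖ ≤ L on Ω. Then there exist constants C1, C2 > 0 (depending only on E, Ω, L, g) such that, along any solution (x(t), v(t)) of the ε-GAD with x(t) ∈ Ω and v(t) a unit vector, d/dt ½‖v(t) − v1(x(t))‖² ≤ ε^{−2} (−g + C1 ‖v(t) − v1(x(t))‖) ‖v(t) − v1(x(t))‖² + C2 ‖v(t) − v1(x(t))‖, where v1(x) is the sign choice of the first eigenvector closest to v(t). -/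

import Mathlib

open Real Filter Set
open scoped Topology RealInnerProductSpace

noncomputable section
abbrev Vec (N : ℕ) := EuclideanSpace ℝ (Fin N)

noncomputable def hessCLM {N : ℕ} (E : Vec N → ℝ) (x : Vec N) : Vec N →L[ℝ] Vec N :=
  fderiv ℝ (gradient E) x

noncomputable def hessOp {N : ℕ} (E : Vec N → ℝ) (x : Vec N) : Module.End ℝ (Vec N) :=
  (hessCLM E x).toLinearMap

def IsMinEigen {N : ℕ} (T : Module.End ℝ (Vec N)) (lam : ℝ) : Prop :=
  T.HasEigenvalue lam ∧ ∀ μ : ℝ, T.HasEigenvalue μ → lam ≤ μ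

def IsMinEigvec {N : ℕ} (T : Module.End ℝ (Vec N)) (w : Vec N) : Prop :=
  ‖w‖ = 1 ∧ ∃ lam : ℝ, IsMinEigen T lam ∧ T w = lam • w

def TwoSmallestEigen {N : ℕ} (T : Module.End ℝ (Vec N)) (lam1 lam2 : ℝ) : Prop :=
  T.HasEigenvalue lam1 ∧ T.HasEigenvalue lam2 ∧ lam1 ≤ lam2 ∧
    (∀ μ : ℝ, T.HasEigenvalue μ → lam1 ≤ μ) ∧
    (∀ μ : ℝ, T.HasEigenvalue μ → μ = lam1 ∨ lam2 ≤ μ) ∧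
    (lam1 < lam2 → Module.finrank ℝ (T.eigenspace lam1) = 1)

/-- the reflection `(I - 2 w ⊗ w) u`. -/
def reflect {N : ℕ} (w u : Vec N) : Vec N := u - (2 * ⟪w, u⟫) • w

/-- ISD vector field with eigendirection `w`. -/
noncomputable def isdField {N : ℕ} (E : Vec N → ℝ) (x w : Vec N) : Vec N :=
  -(reflect w (gradient E x))

def IsISDSolOn {N : ℕ} (E : Vec N → ℝ) (x : ℝ → Vec N) (s : Set ℝ) : Prop :=
  ∀ t ∈ s, ∃ w : Vec N, IsMinEigvec (hessOp E (x t)) w ∧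
    HasDerivAt x (isdField E (x t) w) t

noncomputable def gadVField {N : ℕ} (E : Vec N → ℝ) (x v : Vec N) : Vec N :=
  -(hessCLM E x v) + ⟪v, hessCLM E x v⟫ • v

def IsGADSolOn {N : ℕ} (E : Vec N → ℝ) (ε : ℝ) (x v : ℝ → Vec N) (s : Set ℝ) : Prop :=
  ∀ t ∈ s, ‖v t‖ = 1 ∧ HasDerivAt x (-(reflect (v t) (gradient E (x t)))) t ∧
    HasDerivAt v ((ε ^ 2)⁻¹ • gadVField E (x t) (v t)) t

def IsIndexOneSaddle {N : ℕ} (E : Vec N → ℝ) (x : Vec N) : Prop :=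
  gradient E x = 0 ∧ ∃ lam1 lam2 : ℝ,
    TwoSmallestEigen (hessOp E x) lam1 lam2 ∧ lam1 < 0 ∧ 0 < lam2

end

section AuxLemmas
variable {N : ℕ}

lemma hess_apply_eq (E : Vec N → ℝ) (x u : Vec N) :
    hessCLM E x u = (InnerProductSpace.toDual ℝ (Vec N)).symm
      (fderiv ℝ (fun y => fderiv ℝ E y) x u) := by
  have hg : gradient E = ⇑(InnerProductSpace.toDual ℝ (Vec N)).symm ∘ fun y => fderiv ℝ E y := rfl
  rw [hessCLM, hg, LinearIsometryEquiv.comp_fderiv]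
  simp

lemma hess_inner_eq (E : Vec N → ℝ) (x u v : Vec N) :
    ⟪hessCLM E x u, v⟫ = fderiv ℝ (fun y => fderiv ℝ E y) x u v := by
  rw [hess_apply_eq]
  exact InnerProductSpace.toDual_symm_apply

lemma hess_symm {E : Vec N → ℝ} (hE : ContDiff ℝ 4 E) (x a b : Vec N) :
    ⟪hessCLM E x a, b⟫ = ⟪a, hessCLM E x b⟫ := by
  have hsymm : IsSymmSndFDerivAt ℝ E x :=
    (hE.contDiffAt).isSymmSndFDerivAt (by norm_num)
  rw [hess_inner_eq, real_inner_comm, hess_inner_eq]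
  exact hsymm a b

lemma hess_contDiff {E : Vec N → ℝ} (hE : ContDiff ℝ 4 E) :
    ContDiff ℝ 2 (hessCLM E) := by
  have h1 : ContDiff ℝ 3 (fun y => fderiv ℝ E y) := hE.fderiv_right (by norm_num)
  have hgrad : ContDiff ℝ 3 (gradient E) := by
    have : gradient E = ⇑(InnerProductSpace.toDual ℝ (Vec N)).symm ∘ fun y => fderiv ℝ E y := rfl
    rw [this]
    exact (LinearIsometryEquiv.contDiff _).comp h1
  have : ContDiff ℝ 2 (fun y => fderiv ℝ (gradient E) y) := hgrad.fderiv_right (by norm_num)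
  exact this

lemma spec_quad {T : Module.End ℝ (Vec N)} (hT : LinearMap.IsSymmetric T) {lam1 lam2 : ℝ}
    (h2 : TwoSmallestEigen T lam1 lam2) (hlt : lam1 < lam2)
    {w : Vec N} (hw : ‖w‖ = 1) (hwe : T w = lam1 • w)
    (u : Vec N) (hu : ⟪w, u⟫ = 0) : lam2 * ‖u‖ ^ 2 ≤ ⟪u, T u⟫ := by
  have hn : Module.finrank ℝ (Vec N) = N := finrank_euclideanSpace_fin
  set b := hT.eigenvectorBasis hn with hb
  set μ := hT.eigenvalues hn with hμ
  have hbe : ∀ i, T (b i) = μ i • b i := fun i => hT.apply_eigenvectorBasis hn i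
  have hwS : w ∈ T.eigenspace lam1 := Module.End.mem_eigenspace_iff.2 hwe
  have hw0 : w ≠ 0 := by
    intro h; rw [h, norm_zero] at hw; norm_num at hw
  have hspan : ∀ z ∈ T.eigenspace lam1, ∃ c : ℝ, c • w = z := by
    have hdim := h2.2.2.2.2.2 hlt
    have hw0' : (⟨w, hwS⟩ : T.eigenspace lam1) ≠ 0 := by
      intro h
      exact hw0 (congrArg Subtype.val h)
    intro z hz
    obtain ⟨c, hc⟩ := (finrank_eq_one_iff_of_nonzero' (⟨w, hwS⟩ : T.eigenspace lam1) hw0').1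
      hdim ⟨z, hz⟩
    exact ⟨c, congrArg Subtype.val hc⟩
  have key : ∀ i, ⟪u, b i⟫ = 0 ∨ lam2 ≤ μ i := by
    intro i
    rcases h2.2.2.2.2.1 (μ i) (hT.hasEigenvalue_eigenvalues hn i) with h | h
    · left
      have : b i ∈ T.eigenspace lam1 := by
        rw [Module.End.mem_eigenspace_iff, ← h]; exact hbe i
      obtain ⟨c, hc⟩ := hspan _ this
      rw [← hc, real_inner_smul_right, real_inner_comm, hu, mul_zero]
    · right; exact h
  have hTu : ⟪u, T u⟫ = ∑ i, μ i * ⟪u, b i⟫ ^ 2 := by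
    rw [← b.sum_inner_mul_inner u (T u)]
    refine Finset.sum_congr rfl fun i _ => ?_
    have : ⟪b i, T u⟫ = μ i * ⟪b i, u⟫ := by
      rw [← hT (b i) u, hbe i, real_inner_smul_left]
    rw [this, real_inner_comm (b i) u]; ring
  have hnu : ‖u‖ ^ 2 = ∑ i, ⟪u, b i⟫ ^ 2 := by
    rw [← real_inner_self_eq_norm_sq, ← b.sum_inner_mul_inner u u]
    refine Finset.sum_congr rfl fun i _ => ?_
    rw [real_inner_comm (b i) u]; ring
  rw [hTu, hnu, Finset.mul_sum]
  refine Finset.sum_le_sum fun i _ => ?_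
  rcases key i with h | h
  · rw [h]; ring_nf; exact le_refl _
  · exact mul_le_mul_of_nonneg_right h (sq_nonneg _)

end AuxLemmas


lemma scalar_key {g a b P X K : ℝ} (hg : 0 < g) (ha : a ≤ -g) (hb : g ≤ b)
    (hquad : b * P ≤ a * P - X) (hX : -X ≤ K) (hP : 0 ≤ P) : 2 * g * P ≤ K := by
  nlinarith [mul_nonneg (by linarith : (0:ℝ) ≤ b - a - 2 * g) hP]

lemma scalar_div {g M L nrm : ℝ} (hg : 0 < g) (hM : 0 < M) (hL : 0 ≤ L) (hn : 0 ≤ nrm)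
    (hkey : 2 * g * nrm ^ 2 ≤ nrm * (3 * M * L)) : nrm ≤ 3 * M * (L + 1) / g := by
  rcases eq_or_lt_of_le hn with h0 | h0
  · rw [← h0]; positivity
  · rw [le_div_iff₀ hg]
    have h1 : 2 * g * nrm ≤ 3 * M * L := by nlinarith [hkey, h0]
    nlinarith [h1, mul_nonneg hM.le hL, hM.le, hg]

lemma scalar_main {g c r a b Q Y : ℝ} (hg : 0 < g) (hc0 : 0 ≤ c) (hc1 : c ≤ 1)
    (hr0 : 0 ≤ r) (hr2 : r ^ 2 = 2 - 2 * c) (ha : a ≤ -g) (hb : g ≤ b)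
    (hQ : Q = c ^ 2 * a + Y) (hY : b * (1 - c ^ 2) ≤ Y) :
    c * (a - Q) ≤ (-g + 2 * g * r) * r ^ 2 := by
  have hrle : r ≤ 2 := by nlinarith [hr2, hc0, hr0]
  have h1 : a - Q ≤ (1 - c ^ 2) * (a - b) := by nlinarith [hQ, hY]
  have h2 : c * (a - Q) ≤ c * ((1 - c ^ 2) * (a - b)) := mul_le_mul_of_nonneg_left h1 hc0
  have h4 : 0 ≤ c * (1 - c ^ 2) := by nlinarith
  have h5 : (c * (1 - c ^ 2)) * (a - b) ≤ (c * (1 - c ^ 2)) * (-(2 * g)) :=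
    mul_le_mul_of_nonneg_left (by linarith) h4
  have e1 : 1 - c - c ^ 2 ≤ 2 * r := by
    nlinarith [sq_nonneg (1 - c), mul_nonneg hr0 (by linarith : (0:ℝ) ≤ 2 - r)]
  have hfin : 0 ≤ (-g + 2 * g * r) * r ^ 2 - (c * (1 - c ^ 2)) * (-(2 * g)) := by
    have h7 : r ^ 2 - (2 - 2 * c) = 0 := by linarith
    have h8 : (-g + 2 * g * r) * r ^ 2 - (c * (1 - c ^ 2)) * (-(2 * g))
        = 2 * g * ((1 - c) * (2 * r - (1 - c - c ^ 2)))
          + (-g + 2 * g * r) * (r ^ 2 - (2 - 2 * c)) := by ring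
    rw [h8, h7, mul_zero, add_zero]
    have h9 : 0 ≤ (1 - c) * (2 * r - (1 - c - c ^ 2)) :=
      mul_nonneg (by linarith) (by linarith)
    positivity
  linarith [h2, h5, hfin]

section IFT
variable {N : ℕ}

set_option maxHeartbeats 1000000 in
lemma exists_hasDerivAt_eigvec {E : Vec N → ℝ} (hE : ContDiff ℝ 4 E)
    {s : Set ℝ} (hs : IsOpen s) {t₀ : ℝ} (ht₀ : t₀ ∈ s)
    {x w : ℝ → Vec N} {xd : Vec N} (hx : HasDerivAt x xd t₀)
    (hw : ContinuousOn w s)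
    {lam : ℝ → ℝ}
    (hlam : ∀ t ∈ s, ‖w t‖ = 1 ∧ hessCLM E (x t) (w t) = lam t • w t)
    {l2 : ℝ} (h2 : TwoSmallestEigen (hessOp E (x t₀)) (lam t₀) l2) (hl : lam t₀ < l2) :
    ∃ (wd : Vec N) (ld : ℝ), HasDerivAt w wd t₀ ∧ HasDerivAt lam ld t₀ := by
  classical
  set q₀ : Vec N × (Vec N × ℝ) := (x t₀, (w t₀, lam t₀)) with hq₀
  set Ψ : Vec N × (Vec N × ℝ) → Vec N × (Vec N × ℝ) := fun q =>
    (q.1, (hessCLM E q.1 q.2.1 - q.2.2 • q.2.1, ⟪q.2.1, q.2.1⟫ - 1)) with hΨdef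
  have hw1 : ‖w t₀‖ = 1 := (hlam t₀ ht₀).1
  have hwe : hessCLM E (x t₀) (w t₀) = lam t₀ • w t₀ := (hlam t₀ ht₀).2
  set D := fderiv ℝ (hessCLM E) (x t₀) with hD
  set H₀ := hessCLM E (x t₀) with hH₀
  -- continuous linear projections
  set P1 : Vec N × (Vec N × ℝ) →L[ℝ] Vec N := ContinuousLinearMap.fst ℝ (Vec N) (Vec N × ℝ) with hP1
  set Pu : Vec N × (Vec N × ℝ) →L[ℝ] Vec N :=
    (ContinuousLinearMap.fst ℝ (Vec N) ℝ).comp (ContinuousLinearMap.snd ℝ (Vec N) (Vec N × ℝ)) with hPu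
  set Pμ : Vec N × (Vec N × ℝ) →L[ℝ] ℝ :=
    (ContinuousLinearMap.snd ℝ (Vec N) ℝ).comp (ContinuousLinearMap.snd ℝ (Vec N) (Vec N × ℝ)) with hPμ
  have hhess : ContDiff ℝ 2 (hessCLM E) := hess_contDiff hE
  have hDst : HasStrictFDerivAt (hessCLM E) D (x t₀) :=
    (hhess.contDiffAt).hasStrictFDerivAt (by norm_num)
  have h1 : HasStrictFDerivAt (fun q : Vec N × (Vec N × ℝ) => q.1) P1 q₀ := P1.hasStrictFDerivAt
  have hu : HasStrictFDerivAt (fun q : Vec N × (Vec N × ℝ) => q.2.1) Pu q₀ := Pu.hasStrictFDerivAt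
  have hμ : HasStrictFDerivAt (fun q : Vec N × (Vec N × ℝ) => q.2.2) Pμ q₀ := Pμ.hasStrictFDerivAt
  have hc : HasStrictFDerivAt (fun q : Vec N × (Vec N × ℝ) => hessCLM E q.1) (D.comp P1) q₀ :=
    hDst.comp q₀ h1
  have hA : HasStrictFDerivAt (fun q : Vec N × (Vec N × ℝ) => hessCLM E q.1 q.2.1)
      (H₀.comp Pu + (D.comp P1).flip (w t₀)) q₀ := hc.clm_apply hu
  have hB : HasStrictFDerivAt (fun q : Vec N × (Vec N × ℝ) => q.2.2 • q.2.1)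
      (lam t₀ • Pu + Pμ.smulRight (w t₀)) q₀ := hμ.smul hu
  have hC : HasStrictFDerivAt (fun q : Vec N × (Vec N × ℝ) => ⟪q.2.1, q.2.1⟫ - 1)
      ((fderivInnerCLM ℝ (w t₀, w t₀)).comp (Pu.prod Pu)) q₀ := by
    exact (hu.inner ℝ hu).sub_const 1
  set L : Vec N × (Vec N × ℝ) →L[ℝ] Vec N × (Vec N × ℝ) :=
    P1.prod ((H₀.comp Pu + (D.comp P1).flip (w t₀)
      - (lam t₀ • Pu + Pμ.smulRight (w t₀))).prod
      ((fderivInnerCLM ℝ (w t₀, w t₀)).comp (Pu.prod Pu))) with hL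
  have hΨ : HasStrictFDerivAt Ψ L q₀ := h1.prodMk ((hA.sub hB).prodMk hC)
  have hLapp : ∀ z : Vec N × (Vec N × ℝ), L z =
      (z.1, (D z.1 (w t₀) + H₀ z.2.1 - (lam t₀ • z.2.1 + z.2.2 • w t₀),
        2 * ⟪w t₀, z.2.1⟫)) := by
    intro z
    simp only [hL, ContinuousLinearMap.prod_apply, ContinuousLinearMap.comp_apply,
      ContinuousLinearMap.add_apply, ContinuousLinearMap.sub_apply,
      ContinuousLinearMap.coe_fst', ContinuousLinearMap.coe_snd',
      ContinuousLinearMap.flip_apply, ContinuousLinearMap.smul_apply,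
      ContinuousLinearMap.smulRight_apply, fderivInnerCLM_apply]
    refine Prod.ext rfl (Prod.ext ?_ ?_)
    · simp [hPu, hPμ, hP1]; abel
    · simp only [hPu, ContinuousLinearMap.comp_apply, ContinuousLinearMap.coe_fst',
        ContinuousLinearMap.coe_snd']
      rw [real_inner_comm z.2.1 (w t₀)]
      ring
  -- injectivity
  have hTsymm : LinearMap.IsSymmetric (hessOp E (x t₀)) := fun a b => hess_symm hE (x t₀) a b
  have hinj : Function.Injective L := by
    intro z z' hzz
    rw [← sub_eq_zero] at hzz ⊢
    rw [← map_sub] at hzz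
    set y := z - z' with hy
    have h0 := (hLapp y) ▸ hzz
    have hy1 : y.1 = 0 := congrArg Prod.fst h0
    have hy2 := congrArg (fun p => p.2.1) h0
    have hy3 := congrArg (fun p => p.2.2) h0
    simp only at hy2 hy3
    rw [hy1, map_zero] at hy2
    simp only [ContinuousLinearMap.zero_apply, zero_add] at hy2
    have hyinner : ⟪w t₀, y.2.1⟫ = 0 := by
      have : (2 : ℝ) * ⟪w t₀, y.2.1⟫ = 0 := hy3
      linarith
    have heq : H₀ y.2.1 - (lam t₀ • y.2.1 + y.2.2 • w t₀) = 0 := hy2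
    have hc0 : y.2.2 = 0 := by
      have h := congrArg (fun u => ⟪w t₀, u⟫) heq
      simp only [inner_sub_right, inner_add_right, real_inner_smul_right, inner_zero_right] at h
      have hwH : ⟪w t₀, H₀ y.2.1⟫ = lam t₀ * ⟪w t₀, y.2.1⟫ := by
        rw [← hess_symm hE (x t₀), hwe, real_inner_smul_left]
      rw [hwH, hyinner, real_inner_self_eq_norm_sq, hw1] at h
      norm_num at h
      exact h
    rw [hc0, zero_smul, add_zero] at heq
    have heig : H₀ y.2.1 = lam t₀ • y.2.1 := by
      rwa [sub_eq_zero] at heq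
    have hquad := spec_quad hTsymm h2 hl hw1 hwe y.2.1 hyinner
    have : ⟪y.2.1, (hessOp E (x t₀)) y.2.1⟫ = lam t₀ * ‖y.2.1‖ ^ 2 := by
      show ⟪y.2.1, H₀ y.2.1⟫ = _
      rw [heig, real_inner_smul_right, real_inner_self_eq_norm_sq]
    rw [this] at hquad
    have hb0 : y.2.1 = 0 := by
      by_contra hne
      have hpos : 0 < ‖y.2.1‖ ^ 2 := by
        have := norm_pos_iff.mpr hne
        positivity
      linarith [mul_lt_mul_of_pos_right hl hpos]
    exact Prod.ext hy1 (Prod.ext hb0 hc0)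
  have hbij : Function.Bijective (L.toLinearMap) :=
    ⟨hinj, LinearMap.injective_iff_surjective.1 hinj⟩
  set e : (Vec N × (Vec N × ℝ)) ≃L[ℝ] (Vec N × (Vec N × ℝ)) :=
    (LinearEquiv.ofBijective L.toLinearMap hbij).toContinuousLinearEquiv with he
  have hcoe : (e : Vec N × (Vec N × ℝ) →L[ℝ] Vec N × (Vec N × ℝ)) = L := by
    ext z <;> rfl
  have hΨe : HasStrictFDerivAt Ψ (e : Vec N × (Vec N × ℝ) →L[ℝ] Vec N × (Vec N × ℝ)) q₀ := by
    rwa [hcoe]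
  -- the local inverse
  set linv := hΨe.localInverse Ψ e q₀ with hlinv
  have hΨq₀ : Ψ q₀ = (x t₀, (0, 0)) := by
    simp only [hΨdef, hq₀]
    refine Prod.ext rfl (Prod.ext ?_ ?_)
    · show hessCLM E (x t₀) (w t₀) - lam t₀ • w t₀ = 0
      rw [hwe, sub_self]
    · show ⟪w t₀, w t₀⟫ - 1 = 0
      rw [real_inner_self_eq_norm_sq, hw1]; norm_num
  have hlinvd : HasStrictFDerivAt linv
      ((e.symm : Vec N × (Vec N × ℝ) →L[ℝ] Vec N × (Vec N × ℝ))) (Ψ q₀) := hΨe.to_localInverse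
  -- the curve τ ↦ (x τ, (0,0))
  have hF : HasDerivAt (fun τ : ℝ => ((x τ, ((0 : Vec N), (0 : ℝ))) : Vec N × (Vec N × ℝ)))
      ((xd, (0, 0)) : Vec N × (Vec N × ℝ)) t₀ := hx.prodMk (hasDerivAt_const _ _)
  have hcomp : HasDerivAt (fun τ => linv (x τ, (0, 0))) (e.symm (xd, (0, 0))) t₀ := by
    have := (hΨq₀ ▸ hlinvd.hasFDerivAt).comp_hasDerivAt t₀ hF
    exact this
  have hWd : HasDerivAt (fun τ => (linv (x τ, (0, 0))).2.1) ((e.symm (xd, (0, 0))).2.1) t₀ :=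
    (Pu.hasFDerivAt.comp_hasDerivAt t₀ hcomp : _)
  have hMd : HasDerivAt (fun τ => (linv (x τ, (0, 0))).2.2) ((e.symm (xd, (0, 0))).2.2) t₀ :=
    (Pμ.hasFDerivAt.comp_hasDerivAt t₀ hcomp : _)
  -- eventual equality
  have hqcont : ContinuousAt (fun τ => ((x τ, (w τ, lam τ)) : Vec N × (Vec N × ℝ))) t₀ := by
    have hsnb : s ∈ 𝓝 t₀ := hs.mem_nhds ht₀
    have hxc : ContinuousAt x t₀ := hx.continuousAt
    have hwc : ContinuousAt w t₀ := hw.continuousAt hsnb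
    have hlamc : ContinuousAt lam t₀ := by
      have hcand : ContinuousAt (fun τ => ⟪w τ, hessCLM E (x τ) (w τ)⟫) t₀ := by
        apply ContinuousAt.inner hwc
        have hpair : ContinuousAt (fun τ => ((hessCLM E (x τ), w τ) :
            (Vec N →L[ℝ] Vec N) × Vec N)) t₀ :=
          (hhess.continuous.continuousAt.comp hxc).prodMk hwc
        exact (isBoundedBilinearMap_apply.continuous.continuousAt).comp hpair
      apply hcand.congr
      filter_upwards [hsnb] with τ hτ
      rw [(hlam τ hτ).2, real_inner_smul_right, real_inner_self_eq_norm_sq, (hlam τ hτ).1]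
      norm_num
    exact hxc.prodMk (hwc.prodMk hlamc)
  have hEv : (fun τ => (linv (x τ, (0, 0))).2.1) =ᶠ[𝓝 t₀] w ∧
      (fun τ => (linv (x τ, (0, 0))).2.2) =ᶠ[𝓝 t₀] lam := by
    have hli := hΨe.eventually_left_inverse
    have hev1 : ∀ᶠ τ in 𝓝 t₀, linv (Ψ (x τ, (w τ, lam τ))) = (x τ, (w τ, lam τ)) := by
      have : Tendsto (fun τ => ((x τ, (w τ, lam τ)) : Vec N × (Vec N × ℝ))) (𝓝 t₀) (𝓝 q₀) := hqcont
      exact this.eventually hli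
    have hev2 : ∀ᶠ τ in 𝓝 t₀, τ ∈ s := hs.mem_nhds ht₀
    constructor <;>
    · filter_upwards [hev1, hev2] with τ h1 h2
      have hΨτ : Ψ ((x τ, (w τ, lam τ)) : Vec N × (Vec N × ℝ)) = (x τ, (0, 0)) := by
        simp only [hΨdef]
        refine Prod.ext rfl (Prod.ext ?_ ?_)
        · show hessCLM E (x τ) (w τ) - lam τ • w τ = 0
          rw [(hlam τ h2).2, sub_self]
        · show ⟪w τ, w τ⟫ - 1 = 0
          rw [real_inner_self_eq_norm_sq, (hlam τ h2).1]; norm_num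
      rw [← hΨτ, h1]
  exact ⟨(e.symm (xd, (0, 0))).2.1, (e.symm (xd, (0, 0))).2.2,
    hWd.congr_of_eventuallyEq hEv.1.symm, hMd.congr_of_eventuallyEq hEv.2.symm⟩

end IFT

set_option maxHeartbeats 2000000 in
/-- For `E ∈ C⁴`, along a GAD trajectory in a compact index-1 region `Ω`
with spectral-gap constant `g` and gradient bound `L`, there are constants `C1, C2 > 0`
(depending only on `E, Ω, L, g`) such that
`d/dt ½‖v - v1(x)‖² ≤ ε⁻²(-g + C1‖v - v1(x)‖)‖v - v1(x)‖² + C2‖v - v1(x)‖`,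
where `v1(x)` is the sign choice of the first eigenvector closest to `v`. -/
theorem stmt5 {N : ℕ} (E : Vec N → ℝ) (hE : ContDiff ℝ 4 E)
    (Ω : Set (Vec N)) (hΩc : IsCompact Ω) (hΩne : Ω.Nonempty)
    (lam1 lam2 : Vec N → ℝ)
    (heig : ∀ x ∈ Ω, TwoSmallestEigen (hessOp E x) (lam1 x) (lam2 x) ∧
      lam1 x < 0 ∧ 0 < lam2 x)
    (g : ℝ) (hg : 0 < g)
    (hgmin : ∀ x ∈ Ω, g ≤ min (-(lam1 x)) (lam2 x))
    (L : ℝ) (hL : ∀ x ∈ Ω, ‖gradient E x‖ ≤ L) :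
    ∃ C1 C2 : ℝ, 0 < C1 ∧ 0 < C2 ∧
      ∀ ε : ℝ, 0 < ε → ∀ s : Set ℝ, IsOpen s → ∀ x v : ℝ → Vec N,
        IsGADSolOn E ε x v s → (∀ t ∈ s, x t ∈ Ω) →
        ∀ w : ℝ → Vec N, ContinuousOn w s →
          (∀ t ∈ s, IsMinEigvec (hessOp E (x t)) (w t) ∧ 0 ≤ ⟪v t, w t⟫) →
          ∀ t ∈ s, ∃ d : ℝ,
            HasDerivAt (fun τ => (1/2 : ℝ) * ‖v τ - w τ‖ ^ 2) d t ∧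
            d ≤ (ε ^ 2)⁻¹ * ((-g + C1 * ‖v t - w t‖) * ‖v t - w t‖ ^ 2)
                + C2 * ‖v t - w t‖ := by
  classical
  have hhess : ContDiff ℝ 2 (hessCLM (N := N) E) := hess_contDiff hE
  have hD1 : Continuous (fun y => fderiv ℝ (hessCLM (N := N) E) y) :=
    (hhess.fderiv_right (m := 1) (by norm_num)).continuous
  obtain ⟨M₀, hM₀⟩ := hΩc.exists_bound_of_continuousOn
    ((show Continuous (fun y => ‖fderiv ℝ (hessCLM (N := N) E) y‖) from
      (continuous_norm (E := Vec N →L[ℝ] Vec N →L[ℝ] Vec N)).comp hD1).continuousOn)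
  set M : ℝ := max M₀ 0 + 1 with hM
  have hMpos : 0 < M := by positivity
  have hMb : ∀ y ∈ Ω, ‖fderiv ℝ (hessCLM (N := N) E) y‖ ≤ M := by
    intro y hy
    have := hM₀ y hy
    replace this := (le_abs_self _).trans ((Real.norm_eq_abs _).symm.le.trans this)
    calc ‖fderiv ℝ (hessCLM (N := N) E) y‖ ≤ M₀ := this
    _ ≤ max M₀ 0 + 1 := by
        have := le_max_left M₀ (0:ℝ); linarith
  have hL0 : 0 ≤ L := by
    obtain ⟨y, hy⟩ := hΩne
    exact le_trans (norm_nonneg _) (hL y hy)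
  refine ⟨2 * g, 3 * M * (L + 1) / g, by positivity, by positivity, ?_⟩
  intro ε hε s hs x v hgad hxΩ w hwcont hw t ht
  obtain ⟨hv1, hxd, hvd⟩ := hgad t ht
  have hxtΩ : x t ∈ Ω := hxΩ t ht
  obtain ⟨h2t, hnegt, hpost⟩ := heig (x t) hxtΩ
  have hlt : lam1 (x t) < lam2 (x t) := lt_trans hnegt hpost
  have hgm := hgmin (x t) hxtΩ
  have hgap1 : lam1 (x t) ≤ -g := by
    have := le_min_iff.1 hgm; linarith [this.1]
  have hgap2 : g ≤ lam2 (x t) := (le_min_iff.1 hgm).2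
  -- eigen identities along the path
  have hlamf : ∀ τ ∈ s, ‖w τ‖ = 1 ∧
      hessCLM E (x τ) (w τ) = lam1 (x τ) • w τ := by
    intro τ hτ
    obtain ⟨⟨hwn, lam, ⟨hlamEig, hlamMin⟩, hwe⟩, _⟩ := hw τ hτ
    obtain ⟨⟨hE1, _, _, hmin, _, _⟩, _, _⟩ := heig (x τ) (hxΩ τ hτ)
    have hlameq : lam = lam1 (x τ) := le_antisymm (hlamMin _ hE1) (hmin _ hlamEig)
    refine ⟨hwn, ?_⟩
    rw [← hlameq]
    exact hwe
  have hw1 : ‖w t‖ = 1 := (hlamf t ht).1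
  have hvw0 : (0:ℝ) ≤ ⟪v t, w t⟫ := (hw t ht).2
  have hwet : hessCLM E (x t) (w t) = lam1 (x t) • w t := (hlamf t ht).2
  -- derivative of w via IFT
  obtain ⟨wd, ld, hwd, hld⟩ := exists_hasDerivAt_eigvec hE hs ht hxd hwcont
    (lam := fun τ => lam1 (x τ)) hlamf h2t hlt
  have hTsym : ∀ a b : Vec N, ⟪hessCLM E (x t) a, b⟫ = ⟪a, hessCLM E (x t) b⟫ :=
    fun a b => hess_symm hE (x t) a b
  have hOpSym : LinearMap.IsSymmetric (hessOp E (x t)) := fun a b => hTsym a b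
  have hsnb : s ∈ 𝓝 t := hs.mem_nhds ht
  -- (I1) wd ⟂ w t
  have hwdperp : ⟪w t, wd⟫ = 0 := by
    have hin : HasDerivAt (fun τ => ⟪w τ, w τ⟫) (⟪w t, wd⟫ + ⟪wd, w t⟫) t :=
      HasDerivAt.inner ℝ hwd hwd
    have hconst : HasDerivAt (fun τ => ⟪w τ, w τ⟫) 0 t := by
      have : HasDerivAt (fun _ : ℝ => (1 : ℝ)) 0 t := hasDerivAt_const t 1
      apply this.congr_of_eventuallyEq
      filter_upwards [hsnb] with τ hτ
      rw [real_inner_self_eq_norm_sq, (hlamf τ hτ).1]; norm_num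
    have h := hin.unique hconst
    have h2 : ⟪w t, wd⟫ = ⟪wd, w t⟫ := real_inner_comm _ _
    linarith [h, h2]
  -- (I2) differentiate the eigen identity
  set Dx : Vec N →L[ℝ] Vec N := fderiv ℝ (hessCLM (N := N) E) (x t)
    (-(reflect (v t) (gradient E (x t)))) with hDx
  have hE1 : Dx (w t) + hessCLM E (x t) wd = lam1 (x t) • wd + ld • w t := by
    have hHd : HasDerivAt (fun τ => hessCLM E (x τ)) Dx t := by
      have hdiff : HasFDerivAt (hessCLM (N := N) E)
          (fderiv ℝ (hessCLM (N := N) E) (x t)) (x t) :=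
        ((hhess.differentiable (by norm_num)) (x t)).hasFDerivAt
      exact hdiff.comp_hasDerivAt t hxd
    have hlhs : HasDerivAt (fun τ => hessCLM E (x τ) (w τ))
        (Dx (w t) + hessCLM E (x t) wd) t := hHd.clm_apply hwd
    have hrhs : HasDerivAt (fun τ => lam1 (x τ) • w τ)
        (lam1 (x t) • wd + ld • w t) t := hld.smul hwd
    have heq : (fun τ => hessCLM E (x τ) (w τ)) =ᶠ[𝓝 t] (fun τ => lam1 (x τ) • w τ) := by
      filter_upwards [hsnb] with τ hτ
      exact (hlamf τ hτ).2
    exact hlhs.unique (hrhs.congr_of_eventuallyEq heq)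
  -- (I3) ld value
  have hww : ⟪w t, w t⟫ = (1:ℝ) := by
    rw [real_inner_self_eq_norm_sq, hw1]; norm_num
  have hld_val : ld = ⟪w t, Dx (w t)⟫ := by
    have h : ⟪w t, Dx (w t) + hessCLM E (x t) wd⟫
        = ⟪w t, lam1 (x t) • wd + ld • w t⟫ := by rw [hE1]
    rw [inner_add_right, inner_add_right, real_inner_smul_right, real_inner_smul_right] at h
    have hwHwd : ⟪w t, hessCLM E (x t) wd⟫ = 0 := by
      rw [← hTsym, hwet, real_inner_smul_left, hwdperp, mul_zero]
    rw [hwHwd, hwdperp, hww] at h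
    linarith
  -- (I4) bound on ‖wd‖
  have hDxw : ‖Dx (w t)‖ ≤ 3 * M * L := by
    have h1 : ‖Dx (w t)‖ ≤ ‖Dx‖ * ‖w t‖ := Dx.le_opNorm _
    have h2 : ‖Dx‖ ≤ ‖fderiv ℝ (hessCLM (N := N) E) (x t)‖ *
        ‖-(reflect (v t) (gradient E (x t)))‖ :=
      (fderiv ℝ (hessCLM (N := N) E) (x t)).le_opNorm _
    have h3 : ‖-(reflect (v t) (gradient E (x t)))‖ ≤ 3 * L := by
      rw [norm_neg, reflect]
      have h4 : ‖gradient E (x t)‖ ≤ L := hL _ hxtΩ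
      have h5 : |⟪v t, gradient E (x t)⟫| ≤ ‖gradient E (x t)‖ := by
        have := abs_real_inner_le_norm (v t) (gradient E (x t))
        rwa [hv1, one_mul] at this
      calc ‖gradient E (x t) - (2 * ⟪v t, gradient E (x t)⟫) • v t‖
          ≤ ‖gradient E (x t)‖ + ‖(2 * ⟪v t, gradient E (x t)⟫) • v t‖ := norm_sub_le _ _
        _ = ‖gradient E (x t)‖ + |2 * ⟪v t, gradient E (x t)⟫| * ‖v t‖ := by
            rw [norm_smul, Real.norm_eq_abs]
        _ ≤ L + 2 * L * 1 := by
            rw [hv1, abs_mul]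
            have : |(2:ℝ)| = 2 := by norm_num
            rw [this]
            nlinarith
        _ = 3 * L := by ring
    have hM' : ‖fderiv ℝ (hessCLM (N := N) E) (x t)‖ ≤ M := hMb _ hxtΩ
    have hnn : (0:ℝ) ≤ ‖-(reflect (v t) (gradient E (x t)))‖ := norm_nonneg _
    calc ‖Dx (w t)‖ ≤ ‖Dx‖ * ‖w t‖ := h1
      _ = ‖Dx‖ := by rw [hw1, mul_one]
      _ ≤ M * (3 * L) := by
          calc ‖Dx‖ ≤ ‖fderiv ℝ (hessCLM (N := N) E) (x t)‖ *
              ‖-(reflect (v t) (gradient E (x t)))‖ := h2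
            _ ≤ M * (3 * L) := by
                apply mul_le_mul hM' h3 hnn hMpos.le
      _ = 3 * M * L := by ring
  have hwd_bound : ‖wd‖ ≤ 3 * M * (L + 1) / g := by
    have hquad := spec_quad hOpSym h2t hlt hw1
      (show hessOp E (x t) (w t) = lam1 (x t) • w t from hwet) wd hwdperp
    have hHwd : hessCLM E (x t) wd = lam1 (x t) • wd + ld • w t - Dx (w t) := by
      rw [← hE1]; abel
    have hwdw : ⟪wd, w t⟫ = 0 := by rw [real_inner_comm]; exact hwdperp
    have hinner : ⟪wd, hessOp E (x t) wd⟫ =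
        lam1 (x t) * ‖wd‖ ^ 2 - ⟪wd, Dx (w t)⟫ := by
      show ⟪wd, hessCLM E (x t) wd⟫ = _
      rw [hHwd, inner_sub_right, inner_add_right, real_inner_smul_right,
        real_inner_smul_right, real_inner_self_eq_norm_sq, hwdw]
      ring
    rw [hinner] at hquad
    have hCS : ⟪wd, Dx (w t)⟫ ≤ ‖wd‖ * ‖Dx (w t)‖ := real_inner_le_norm _ _
    have hX : -⟪wd, Dx (w t)⟫ ≤ ‖wd‖ * (3 * M * L) := by
      have h1 := abs_real_inner_le_norm wd (Dx (w t))
      have h2 := mul_le_mul_of_nonneg_left hDxw (norm_nonneg wd)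
      have h3 := neg_abs_le ⟪wd, Dx (w t)⟫
      linarith
    have hkey : 2 * g * ‖wd‖ ^ 2 ≤ ‖wd‖ * (3 * M * L) :=
      scalar_key hg hgap1 hgap2 hquad hX (sq_nonneg _)
    exact scalar_div hg hMpos hL0 (norm_nonneg wd) hkey
  -- (I5) the derivative of the distance
  set r : ℝ := ‖v t - w t‖ with hr
  set vd : Vec N := (ε ^ 2)⁻¹ • gadVField E (x t) (v t) with hvdd
  have hdiffvw : HasDerivAt (fun τ => v τ - w τ) (vd - wd) t := hvd.sub hwd
  have hphi : HasDerivAt (fun τ => (1/2 : ℝ) * ‖v τ - w τ‖ ^ 2)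
      (⟪v t - w t, vd - wd⟫) t := by
    have hin : HasDerivAt (fun τ => ⟪v τ - w τ, v τ - w τ⟫)
        (⟪v t - w t, vd - wd⟫ + ⟪vd - wd, v t - w t⟫) t :=
      HasDerivAt.inner ℝ hdiffvw hdiffvw
    have hmul := hin.const_mul (1/2 : ℝ)
    have hfe : (fun τ => (1/2 : ℝ) * ⟪v τ - w τ, v τ - w τ⟫)
        = fun τ => (1/2 : ℝ) * ‖v τ - w τ‖ ^ 2 := by
      funext τ; rw [real_inner_self_eq_norm_sq]
    rw [hfe] at hmul
    have : (1/2 : ℝ) * (⟪v t - w t, vd - wd⟫ + ⟪vd - wd, v t - w t⟫)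
        = ⟪v t - w t, vd - wd⟫ := by
      rw [real_inner_comm (vd - wd) (v t - w t)]; ring
    rwa [this] at hmul
  refine ⟨⟪v t - w t, vd - wd⟫, hphi, ?_⟩
  -- (I6) the bound
  have hr0 : 0 ≤ r := norm_nonneg _
  have hf0 : 0 ≤ ⟪v t, w t⟫ := hvw0
  have hf1 : ⟪v t, w t⟫ ≤ 1 := by
    have := real_inner_le_norm (v t) (w t)
    rwa [hv1, hw1, one_mul] at this
  have hvv : ⟪v t, v t⟫ = (1:ℝ) := by
    rw [real_inner_self_eq_norm_sq, hv1]; norm_num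
  have hwv : ⟪w t, v t⟫ = ⟪v t, w t⟫ := real_inner_comm _ _
  have hr2 : r ^ 2 = 2 - 2 * ⟪v t, w t⟫ := by
    rw [hr, norm_sub_sq_real, hv1, hw1]; ring
  set u : Vec N := v t - ⟪v t, w t⟫ • w t with hudef
  have huperp : ⟪w t, u⟫ = 0 := by
    rw [hudef, inner_sub_right, real_inner_smul_right, hww, hwv]; ring
  have hnu : ‖u‖ ^ 2 = 1 - ⟪v t, w t⟫ ^ 2 := by
    rw [hudef, norm_sub_sq_real, real_inner_smul_right, norm_smul, Real.norm_eq_abs,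
      hv1, hw1, mul_one, sq_abs]
    ring
  have hvdecomp : v t = ⟪v t, w t⟫ • w t + u := by rw [hudef]; abel
  have hwHw : ⟪w t, hessCLM E (x t) (w t)⟫ = lam1 (x t) := by
    rw [hwet, real_inner_smul_right, hww, mul_one]
  have hwHu : ⟪w t, hessCLM E (x t) u⟫ = 0 := by
    rw [← hTsym, hwet, real_inner_smul_left, huperp, mul_zero]
  have huHw : ⟪u, hessCLM E (x t) (w t)⟫ = 0 := by
    rw [hwet, real_inner_smul_right, real_inner_comm (w t) u, huperp, mul_zero]
  have hq_val : ⟪v t, hessCLM E (x t) (v t)⟫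
      = ⟪v t, w t⟫ ^ 2 * lam1 (x t) + ⟪u, hessCLM E (x t) u⟫ := by
    conv_lhs => rw [hvdecomp]
    simp only [map_add, map_smul, inner_add_left, inner_add_right,
      real_inner_smul_left, real_inner_smul_right]
    rw [hwHw, hwHu, huHw]
    ring
  have hq_lb : lam2 (x t) * (1 - ⟪v t, w t⟫ ^ 2) ≤ ⟪u, hessCLM E (x t) u⟫ := by
    have := spec_quad hOpSym h2t hlt hw1
      (show hessOp E (x t) (w t) = lam1 (x t) • w t from hwet) u huperp
    rwa [hnu] at this
  have hwHv : ⟪w t, hessCLM E (x t) (v t)⟫ = lam1 (x t) * ⟪v t, w t⟫ := by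
    rw [← hTsym, hwet, real_inner_smul_left, hwv]
  have hAval : ⟪v t - w t, gadVField E (x t) (v t)⟫
      = ⟪v t, w t⟫ * (lam1 (x t) - ⟪v t, hessCLM E (x t) (v t)⟫) := by
    rw [gadVField]
    rw [inner_add_right, inner_neg_right, real_inner_smul_right,
      inner_sub_left, inner_sub_left]
    rw [hwHv, hvv, hwv]
    ring
  have hAbound : ⟪v t - w t, gadVField E (x t) (v t)⟫ ≤ (-g + 2 * g * r) * r ^ 2 := by
    rw [hAval]
    exact scalar_main hg hf0 hf1 hr0 hr2 hgap1 hgap2 hq_val hq_lb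
  -- combine
  have hε2 : (0:ℝ) < ε ^ 2 := by positivity
  have hsplit : ⟪v t - w t, vd - wd⟫
      = (ε ^ 2)⁻¹ * ⟪v t - w t, gadVField E (x t) (v t)⟫ - ⟪v t - w t, wd⟫ := by
    rw [inner_sub_right, hvdd, real_inner_smul_right]
  have hterm1 : (ε ^ 2)⁻¹ * ⟪v t - w t, gadVField E (x t) (v t)⟫
      ≤ (ε ^ 2)⁻¹ * ((-g + 2 * g * r) * r ^ 2) :=
    mul_le_mul_of_nonneg_left hAbound (by positivity)
  have hterm2 : -⟪v t - w t, wd⟫ ≤ (3 * M * (L + 1) / g) * r := by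
    have h1 : |⟪v t - w t, wd⟫| ≤ r * ‖wd‖ := by
      have := abs_real_inner_le_norm (v t - w t) wd
      rwa [← hr] at this
    have h2 : -⟪v t - w t, wd⟫ ≤ r * ‖wd‖ := by
      have := neg_abs_le ⟪v t - w t, wd⟫
      linarith [h1, this]
    calc -⟪v t - w t, wd⟫ ≤ r * ‖wd‖ := h2
      _ ≤ r * (3 * M * (L + 1) / g) := mul_le_mul_of_nonneg_left hwd_bound hr0
      _ = (3 * M * (L + 1) / g) * r := by ring
  rw [hsplit]
  linarith
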